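/- Let p > 1. There exists ω₀ with 0 < ω₀ < ω_p = p/(p+1)² such that for every ω with 0 < ω < ω₀ one has α − f(α)/f'(α) > β; that is, for ω close to zero the condition α − f(α)/f'(α) ≤ β fails. Here α = (p/(2(2p−1)))^{1/(p−1)}, β = ((p/(p+1))·(1−√(1−(p+1)²ω/p)))^{1/(p−1)}, and f'(u) = −ω + p·u^{p−1} − (2p−1)·u^{2(p−1)}. -/

import Mathlib

open Real Set Filter Topology

/-- For `p > 1`, there exists `ω₀ ∈ (0, ω_p)` such that for every `ω ∈ (0, ω₀)` one has
`α - f(α)/f'(α) > β(ω)`; that is, for `ω` close to `0` the condition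
`α - f(α)/f'(α) ≤ β` fails. -/
theorem condition_fails_near_zero (p : ℝ) (hp : 1 < p)
    (f f' : ℝ → ℝ → ℝ)
    (hf : ∀ ω : ℝ, ∀ u > (0 : ℝ), f ω u = -ω * u + u ^ p - u ^ (2 * p - 1))
    (hf' : ∀ ω : ℝ, ∀ u > (0 : ℝ),
        f' ω u = -ω + p * u ^ (p - 1) - (2 * p - 1) * u ^ (2 * (p - 1)))
    (α : ℝ) (hα : α = (p / (2 * (2 * p - 1))) ^ (1 / (p - 1)))
    (β : ℝ → ℝ)
    (hβ : ∀ ω : ℝ, β ω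
        = (p / (p + 1) * (1 - Real.sqrt (1 - (p + 1) ^ 2 * ω / p))) ^ (1 / (p - 1))) :
    ∃ ω₀ : ℝ, 0 < ω₀ ∧ ω₀ < p / (p + 1) ^ 2 ∧
      ∀ ω : ℝ, 0 < ω → ω < ω₀ → β ω < α - f ω α / f' ω α := by
  have hp1 : (0:ℝ) < p - 1 := by linarith
  have h2p : (0:ℝ) < 2 * p - 1 := by linarith
  set a : ℝ := p / (2 * (2 * p - 1)) with ha_def
  have ha_pos : 0 < a := by positivity
  have hαpos : 0 < α := by
    rw [hα]; exact Real.rpow_pos_of_pos ha_pos _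
  have haα : α ^ (p - 1) = a := by
    rw [hα, ← Real.rpow_mul ha_pos.le, one_div, inv_mul_cancel₀ hp1.ne', Real.rpow_one]
  have haα2 : α ^ ((p - 1) * 2) = a ^ 2 := by
    rw [Real.rpow_mul hαpos.le, haα, show ((2:ℝ)) = ((2:ℕ):ℝ) by norm_num,
      Real.rpow_natCast]
  -- formulas for f and f' at α
  have hfα : ∀ ω : ℝ, f ω α = α * (a - a ^ 2 - ω) := by
    intro ω
    rw [hf ω α hαpos, show p = (p - 1) + 1 by ring,
      show 2 * ((p-1)+1) - 1 = (p - 1) * 2 + 1 by ring,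
      Real.rpow_add hαpos, Real.rpow_add hαpos, Real.rpow_one, haα, haα2]
    ring
  have hf'α : ∀ ω : ℝ, f' ω α = p * a / 2 - ω := by
    intro ω
    rw [hf' ω α hαpos, show 2 * (p - 1) = (p - 1) * 2 by ring, haα, haα2]
    have : (2 * p - 1) * a ^ 2 = p * a / 2 := by
      rw [ha_def]; field_simp
    rw [this]; ring
  -- the limit L of α - f/f' as ω → 0
  set L : ℝ := α - α * (a - a ^ 2 - 0) / (p * a / 2 - 0) with hL_def
  have hden0 : p * a / 2 - 0 ≠ 0 := by rw [sub_zero]; positivity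
  have hLpos : 0 < L := by
    have : L = α * (2 * (p - 1) ^ 2) / (p * (2 * p - 1)) := by
      have hp0 : p ≠ 0 := by linarith
      have h2 : p * 2 - 1 ≠ 0 := by linarith
      rw [hL_def, ha_def]; field_simp; ring
    rw [this]; positivity
  have hg : Tendsto (fun ω => α - f ω α / f' ω α) (𝓝 0) (𝓝 L) := by
    have heq : (fun ω : ℝ => α - f ω α / f' ω α)
        = fun ω : ℝ => α - α * (a - a ^ 2 - ω) / (p * a / 2 - ω) :=
      funext fun ω => by rw [hfα, hf'α]
    rw [heq]
    have hc : ContinuousAt (fun ω : ℝ => α - α * (a - a ^ 2 - ω) / (p * a / 2 - ω)) 0 := by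
      apply ContinuousAt.sub continuousAt_const
      exact ContinuousAt.div (by fun_prop) (by fun_prop) hden0
    exact hc.tendsto
  have hβ0 : Tendsto β (𝓝 0) (𝓝 0) := by
    have heq : β = fun ω : ℝ =>
        (p / (p + 1) * (1 - Real.sqrt (1 - (p + 1) ^ 2 * ω / p))) ^ (1 / (p - 1)) :=
      funext hβ
    rw [heq]
    have hinner : Tendsto (fun ω : ℝ =>
        p / (p + 1) * (1 - Real.sqrt (1 - (p + 1) ^ 2 * ω / p))) (𝓝 0) (𝓝 0) := by
      have hc : ContinuousAt (fun ω : ℝ =>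
          p / (p + 1) * (1 - Real.sqrt (1 - (p + 1) ^ 2 * ω / p))) 0 := by fun_prop
      have h0 : p / (p + 1) * (1 - Real.sqrt (1 - (p + 1) ^ 2 * 0 / p)) = 0 := by
        simp
      simpa [h0] using hc.tendsto
    have he : (0:ℝ) < 1 / (p - 1) := by positivity
    have hrc : ContinuousAt (fun x : ℝ => x ^ (1 / (p - 1))) 0 :=
      Real.continuousAt_rpow_const 0 _ (Or.inr he.le)
    have := hrc.tendsto.comp hinner
    simpa [Function.comp_def, one_div, Real.zero_rpow (show ((p-1):ℝ)⁻¹ ≠ 0 by positivity)] using this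
  have hdiff : Tendsto (fun ω => (α - f ω α / f' ω α) - β ω) (𝓝 0) (𝓝 (L - 0)) :=
    hg.sub hβ0
  have hev : ∀ᶠ ω in 𝓝 (0:ℝ), 0 < (α - f ω α / f' ω α) - β ω :=
    hdiff.eventually (eventually_gt_nhds (by linarith))
  rw [Metric.eventually_nhds_iff] at hev
  obtain ⟨ε, hε, hball⟩ := hev
  have hωp : (0:ℝ) < p / (p + 1) ^ 2 := by positivity
  refine ⟨min ε (p / (p + 1) ^ 2 / 2), lt_min hε (by linarith), ?_, ?_⟩
  · exact lt_of_le_of_lt (min_le_right _ _) (by linarith)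
  · intro ω hω0 hωlt
    have hωε : dist ω 0 < ε := by
      rw [Real.dist_eq, sub_zero, abs_of_pos hω0]
      exact lt_of_lt_of_le hωlt (min_le_left _ _)
    have := hball hωε
    linarith
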